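/- Fix a natural number C ≥ 2. For a probability vector s ∈ ℝ^C (nonnegative entries summing to 1) with designated true class y, suppose s_c = (1 − s_y)/(C − 1) for every class c ≠ y. Let s(x₁) and s(x₂) be two such vectors with true classes y₁, y₂ and suppose 1/2 < s_{y₁}(x₁) < s_{y₂}(x₂) ≤ 1. Then the Shannon entropies satisfy H(s(x₁)) > H(s(x₂)), where H(s) = Σ_{c=1}^{C} (−s_c · log s_c) (with the convention 0·log 0 = 0). -/

import Mathlib

open Finset

/-- Shannon entropy (natural logarithm) of a vector `s : Fin C → ℝ`;
`Real.log 0 = 0` gives the convention `0 · log 0 = 0`. -/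
noncomputable def shannonEntropy {C : ℕ} (s : Fin C → ℝ) : ℝ :=
  ∑ c : Fin C, (-(s c) * Real.log (s c))

lemma entropy_eq_F (C : ℕ) (hC : 2 ≤ C) (s : Fin C → ℝ) (y : Fin C)
    (h_unif : ∀ c, c ≠ y → s c = (1 - s y) / ((C : ℝ) - 1)) :
    shannonEntropy s =
      Real.negMulLog (s y) + ((C : ℝ) - 1) * Real.negMulLog ((1 - s y) / ((C : ℝ) - 1)) := by
  have hne : y ∈ Finset.univ (α := Fin C) := mem_univ y
  unfold shannonEntropy
  have : ∀ c : Fin C, -(s c) * Real.log (s c) = Real.negMulLog (s c) := fun c => rfl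
  simp_rw [this]
  rw [← Finset.sum_erase_add _ _ hne]
  have hcard : ((Finset.univ.erase y).card : ℝ) = (C : ℝ) - 1 := by
    rw [Finset.card_erase_of_mem hne, Finset.card_univ, Fintype.card_fin]
    have h1 : 1 ≤ C := le_trans (by norm_num) hC
    rw [Nat.cast_sub h1]
    simp
  rw [Finset.sum_congr rfl (fun c hc => by
    rw [h_unif c (Finset.ne_of_mem_erase hc)]), Finset.sum_const, nsmul_eq_mul, hcard]
  ring

lemma F_strictAnti (C : ℕ) (hC : 2 ≤ C) :
    StrictAntiOn (fun p : ℝ =>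
      Real.negMulLog p + ((C : ℝ) - 1) * Real.negMulLog ((1 - p) / ((C : ℝ) - 1)))
      (Set.Icc (1/2 : ℝ) 1) := by
  set k : ℝ := (C : ℝ) - 1 with hk
  have hk1 : (1 : ℝ) ≤ k := by
    have : (2 : ℝ) ≤ (C : ℝ) := by exact_mod_cast hC
    simp [hk]; linarith
  have hk0 : (0 : ℝ) < k := lt_of_lt_of_le one_pos hk1
  apply strictAntiOn_of_deriv_neg (convex_Icc _ _)
  · apply Continuous.continuousOn
    fun_prop
  · intro p hp
    rw [interior_Icc] at hp
    obtain ⟨hp1, hp2⟩ := hp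
    have hp0 : (0 : ℝ) < p := by linarith
    have hq0 : (0 : ℝ) < (1 - p) / k := div_pos (by linarith) hk0
    have h1 : HasDerivAt Real.negMulLog (-Real.log p - 1) p :=
      Real.hasDerivAt_negMulLog (ne_of_gt hp0)
    have h2 : HasDerivAt (fun p : ℝ => (1 - p) / k) (-1 / k) p := by
      have := ((hasDerivAt_id p).const_sub 1).div_const k
      simpa using this
    have h3 : HasDerivAt (fun p : ℝ => Real.negMulLog ((1 - p) / k))
        ((-Real.log ((1 - p) / k) - 1) * (-1 / k)) p :=
      by have := (Real.hasDerivAt_negMulLog (ne_of_gt hq0)).comp p h2; exact this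
    have h4 : HasDerivAt (fun p : ℝ =>
        Real.negMulLog p + k * Real.negMulLog ((1 - p) / k))
        ((-Real.log p - 1) + k * ((-Real.log ((1 - p) / k) - 1) * (-1 / k))) p :=
      h1.add (h3.const_mul k)
    rw [h4.deriv]
    have hsimp : (-Real.log p - 1) + k * ((-Real.log ((1 - p) / k) - 1) * (-1 / k))
        = Real.log ((1 - p) / k) - Real.log p := by
      field_simp
      ring
    rw [hsimp]
    have hlt : (1 - p) / k < p := by
      have h1p : (1 - p) / k ≤ 1 - p := by
        rw [div_le_iff₀ hk0]
        nlinarith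
      linarith
    have := Real.log_lt_log hq0 hlt
    linarith

/-- Part 1 of Theorem 2: for two probability vectors whose non-true-class
entries are all equal, with true-class components `1/2 < s₁(y₁) < s₂(y₂) ≤ 1`,
the entropy of the first is strictly larger. -/
theorem entropy_comparison
    (C : ℕ) (hC : 2 ≤ C)
    (s₁ s₂ : Fin C → ℝ) (y₁ y₂ : Fin C)
    (hs₁_nonneg : ∀ c, 0 ≤ s₁ c) (hs₁_sum : ∑ c : Fin C, s₁ c = 1)
    (hs₂_nonneg : ∀ c, 0 ≤ s₂ c) (hs₂_sum : ∑ c : Fin C, s₂ c = 1)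
    (hs₁_unif : ∀ c, c ≠ y₁ → s₁ c = (1 - s₁ y₁) / ((C : ℝ) - 1))
    (hs₂_unif : ∀ c, c ≠ y₂ → s₂ c = (1 - s₂ y₂) / ((C : ℝ) - 1))
    (h_half : (1 : ℝ) / 2 < s₁ y₁) (h_lt : s₁ y₁ < s₂ y₂) (h_le : s₂ y₂ ≤ 1) :
    shannonEntropy s₂ < shannonEntropy s₁ := by
  rw [entropy_eq_F C hC s₁ y₁ hs₁_unif, entropy_eq_F C hC s₂ y₂ hs₂_unif]
  exact F_strictAnti C hC ⟨le_of_lt h_half, le_of_lt (lt_of_lt_of_le h_lt h_le)⟩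
    ⟨le_of_lt (lt_trans h_half h_lt), h_le⟩ h_lt
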